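/- Let p ∈ (0,∞) and let μ be a finite Borel measure on ℂ. Let A ⊆ L^p(μ) be a set of measurable functions that is an algebra (closed under pointwise addition, pointwise multiplication, and scalar multiplication), let b ∈ L^p(μ) lie in the closure of A in L^p(μ), and let c ∈ L^p(μ). Suppose that a·bⁿ·c is μ-essentially bounded for every a ∈ A and every integer n ≥ 0. Then a·bⁿ·c lies in the closure of {a′·c : a′ ∈ A} in L^p(μ) for every a ∈ A and every integer n ≥ 0. -/

import Mathlib

open MeasureTheory Filter ENNReal

/-- Tool lemma: let `A ⊆ L^p(μ)` be an algebra of measurable functions, `b` in the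
`L^p(μ)`-closure of `A`, `c ∈ L^p(μ)`, and suppose `a·bⁿ·c` is essentially bounded for all
`a ∈ A`, `n ≥ 0`.  Then `a·bⁿ·c` lies in the `L^p(μ)`-closure of `{a′·c : a′ ∈ A}`. -/
theorem stmt_15 (p : ℝ) (hp : 0 < p) (μ : Measure ℂ) [IsFiniteMeasure μ]
    (A : Set (ℂ → ℂ))
    (hAmeas : ∀ a ∈ A, Measurable a)
    (hALp : ∀ a ∈ A, MemLp a (ENNReal.ofReal p) μ)
    (hAadd : ∀ a ∈ A, ∀ a' ∈ A, (fun z => a z + a' z) ∈ A)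
    (hAmul : ∀ a ∈ A, ∀ a' ∈ A, (fun z => a z * a' z) ∈ A)
    (hAsmul : ∀ a ∈ A, ∀ t : ℂ, (fun z => t * a z) ∈ A)
    (b : ℂ → ℂ) (hb : MemLp b (ENNReal.ofReal p) μ)
    (hbA : ∀ ε : ℝ, 0 < ε → ∃ a ∈ A,
      eLpNorm (fun z => a z - b z) (ENNReal.ofReal p) μ < ENNReal.ofReal ε)
    (c : ℂ → ℂ) (hc : MemLp c (ENNReal.ofReal p) μ)
    (hbd : ∀ a ∈ A, ∀ n : ℕ, ∃ C : ℝ, ∀ᵐ z ∂μ, ‖a z * b z ^ n * c z‖ ≤ C) :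
    ∀ a ∈ A, ∀ n : ℕ, ∀ ε : ℝ, 0 < ε → ∃ a' ∈ A,
      eLpNorm (fun z => a' z * c z - a z * b z ^ n * c z) (ENNReal.ofReal p) μ
        < ENNReal.ofReal ε := by
  set q := ENNReal.ofReal p with hq
  intro a ha n
  induction n generalizing a with
  | zero =>
    intro ε hε
    refine ⟨a, ha, ?_⟩
    have : (fun z => a z * c z - a z * b z ^ 0 * c z) = fun _ => (0 : ℂ) := by
      funext z; simp
    rw [this]
    simpa [eLpNorm_zero] using ENNReal.ofReal_pos.mpr hε
  | succ n ih =>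
    intro ε hε
    -- constants
    obtain ⟨C, hC⟩ := hbd a ha n
    set C' : ℝ := max C 0 with hC'
    have hC'0 : 0 ≤ C' := le_max_right _ _
    set K : ENNReal := LpAddConst q with hK
    have hKtop : K ≠ ∞ := (LpAddConst_lt_top q).ne
    have hK0 : K ≠ 0 := by
      rw [hK, LpAddConst]
      split_ifs
      · exact (ENNReal.rpow_pos (by norm_num) ENNReal.ofNat_ne_top).ne'
      · exact one_ne_zero
    set M : ℝ≥0∞ := ENNReal.ofReal C' + 1 with hM
    have hM0 : M ≠ 0 := by simp [hM]
    have hMtop : M ≠ ∞ := by simp [hM, ENNReal.ofReal_ne_top]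
    have hKM0 : K * M ≠ 0 := mul_ne_zero hK0 hM0
    have hKMtop : K * M ≠ ∞ := ENNReal.mul_ne_top hKtop hMtop
    set η : ℝ≥0∞ := ENNReal.ofReal ε / (K * M) with hη
    have hη0 : η ≠ 0 := by
      rw [hη]
      exact (ENNReal.div_pos (by simpa using (ENNReal.ofReal_pos.mpr hε).ne') hKMtop).ne'
    have hηtop : η ≠ ∞ := by
      rw [hη]
      exact (ENNReal.div_lt_top ENNReal.ofReal_ne_top hKM0).ne
    have hηr : 0 < η.toReal := ENNReal.toReal_pos hη0 hηtop
    set δ : ℝ := η.toReal / 2 with hδ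
    have hδ0 : 0 < δ := by positivity
    have hδη : ENNReal.ofReal δ < η := by
      have h2 : ENNReal.ofReal δ < ENNReal.ofReal η.toReal :=
        (ENNReal.ofReal_lt_ofReal_iff hηr).mpr (by rw [hδ]; linarith)
      rwa [ENNReal.ofReal_toReal hηtop] at h2
    -- pick a₁ ∈ A close to b
    obtain ⟨a₁, ha₁A, ha₁⟩ := hbA δ hδ0
    -- apply induction hypothesis to a * a₁
    obtain ⟨a', ha'A, ha'⟩ := ih (fun z => a z * a₁ z) (hAmul a ha a₁ ha₁A) δ hδ0
    refine ⟨a', ha'A, ?_⟩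
    -- decompose
    have hdecomp : (fun z => a' z * c z - a z * b z ^ (n + 1) * c z)
        = (fun z => a' z * c z - a z * a₁ z * b z ^ n * c z)
          + (fun z => a z * a₁ z * b z ^ n * c z - a z * b z ^ (n + 1) * c z) := by
      funext z; simp only [Pi.add_apply]; ring
    -- measurability
    have hma : AEStronglyMeasurable a μ := (hAmeas a ha).aestronglyMeasurable
    have hma₁ : AEStronglyMeasurable a₁ μ := (hAmeas a₁ ha₁A).aestronglyMeasurable
    have hma' : AEStronglyMeasurable a' μ := (hAmeas a' ha'A).aestronglyMeasurable
    have hmb : AEStronglyMeasurable b μ := hb.1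
    have hmc : AEStronglyMeasurable c μ := hc.1
    have hmf1 : AEStronglyMeasurable (fun z => a' z * c z - a z * a₁ z * b z ^ n * c z) μ :=
      (hma'.mul hmc).sub (((hma.mul hma₁).mul (hmb.pow n)).mul hmc)
    have hmf2 : AEStronglyMeasurable
        (fun z => a z * a₁ z * b z ^ n * c z - a z * b z ^ (n + 1) * c z) μ :=
      (((hma.mul hma₁).mul (hmb.pow n)).mul hmc).sub
        ((hma.mul (hmb.pow (n + 1))).mul hmc)
    -- bound the second piece
    have hbound : eLpNorm (fun z => a z * a₁ z * b z ^ n * c z - a z * b z ^ (n + 1) * c z) q μ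
        ≤ ENNReal.ofReal C' * eLpNorm (fun z => a₁ z - b z) q μ := by
      have h := eLpNorm_le_nnreal_smul_eLpNorm_of_ae_le_mul
        (f := fun z => a z * a₁ z * b z ^ n * c z - a z * b z ^ (n + 1) * c z)
        (g := fun z => a₁ z - b z) (c := C'.toNNReal) (μ := μ) ?_ q
      · simpa [ENNReal.smul_def, ENNReal.ofReal] using h
      · filter_upwards [hC] with z hz
        have hrw : a z * a₁ z * b z ^ n * c z - a z * b z ^ (n + 1) * c z
            = (a z * b z ^ n * c z) * (a₁ z - b z) := by ring
        rw [← NNReal.coe_le_coe]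
        push_cast
        rw [hrw, Real.coe_toNNReal _ hC'0, norm_mul]
        gcongr
        exact hz.trans (le_max_left _ _)
    -- combine
    calc eLpNorm (fun z => a' z * c z - a z * b z ^ (n + 1) * c z) q μ
        = eLpNorm ((fun z => a' z * c z - a z * a₁ z * b z ^ n * c z)
          + (fun z => a z * a₁ z * b z ^ n * c z - a z * b z ^ (n + 1) * c z)) q μ := by
          rw [hdecomp]
      _ ≤ K * (eLpNorm (fun z => a' z * c z - a z * a₁ z * b z ^ n * c z) q μ
          + eLpNorm (fun z => a z * a₁ z * b z ^ n * c z - a z * b z ^ (n + 1) * c z) q μ) :=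
          eLpNorm_add_le' hmf1 hmf2 q
      _ ≤ K * (ENNReal.ofReal δ + ENNReal.ofReal C' * ENNReal.ofReal δ) := by
          exact mul_le_mul_right
            (add_le_add ha'.le
              (hbound.trans (mul_le_mul_right ha₁.le (ENNReal.ofReal C')))) K
      _ = K * M * ENNReal.ofReal δ := by rw [hM]; ring
      _ < K * M * η := by
          exact ENNReal.mul_lt_mul_iff_right hKM0 hKMtop |>.mpr hδη
      _ = ENNReal.ofReal ε := by
          rw [hη, ENNReal.mul_div_cancel hKM0 hKMtop]
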